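/- arXiv:2012.14028 — 10 statements merged into one kernel-verified Lean document; each statement's English description precedes it below -/
import Mathlib

section
/- Fix n, r, d ∈ ℕ, matrices U ∈ Matrix (Fin n) (Fin r) ℝ with Uᵀ*U = 1, Y ∈ Matrix (Fin d) (Fin r) ℝ with C := Yᵀ*Y invertible, L ∈ Matrix (Fin n) (Fin n) ℝ, F ∈ Matrix (Fin n) (Fin d) ℝ, and a skew-symmetric Φ ∈ Matrix (Fin r) (Fin r) ℝ. Write L_r := Uᵀ*L*U and define A* := L*U - U*L_r + (1 - U*Uᵀ)*F*Y*C⁻¹ + U*Φ and B* := Y*L_rᵀ + Fᵀ*U + Y*Φ. Then Uᵀ*A* = Φ, and for every A ∈ Matrix (Fin n) (Fin r) ℝ with Uᵀ*A = Φ and every B ∈ Matrix (Fin d) (Fin r) ℝ, the Frobenius norm satisfies ‖A**Yᵀ + U*(B*)ᵀ - L*U*Yᵀ - F‖_F ≤ ‖A*Yᵀ + U*Bᵀ - L*U*Yᵀ - F‖_F. That is, (A*, B*) is a global minimizer of the f-OTD variational principle 𝓕(U̇, Ẏ) = ‖d/dt(UYᵀ) - L U Yᵀ - F‖_F² over all admissible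 derivative pairs satisfying the orthonormality-rate constraint UᵀU̇ = Φ. -/
open Matrix

/-- The Frobenius norm of a real matrix, `‖M‖_F = sqrt (trace (Mᵀ M))`. -/
noncomputable def frobNorm {n d : ℕ} (M : Matrix (Fin n) (Fin d) ℝ) : ℝ :=
  Real.sqrt (Matrix.trace (Mᵀ * M))

lemma trace_tmul_self_nonneg {m k : ℕ} (M : Matrix (Fin m) (Fin k) ℝ) :
    0 ≤ Matrix.trace (Mᵀ * M) := by
  simp only [Matrix.trace, Matrix.diag, Matrix.mul_apply, Matrix.transpose_apply]
  exact Finset.sum_nonneg fun i _ => Finset.sum_nonneg fun j _ => mul_self_nonneg _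

lemma trace_pythagoras {m k : ℕ} (E D : Matrix (Fin m) (Fin k) ℝ)
    (h : Matrix.trace (Eᵀ * D) = 0) :
    Matrix.trace ((E + D)ᵀ * (E + D)) =
      Matrix.trace (Eᵀ * E) + Matrix.trace (Dᵀ * D) := by
  have h' : Matrix.trace (Dᵀ * E) = 0 := by
    have h2 : (Eᵀ * D)ᵀ = Dᵀ * E := by
      rw [Matrix.transpose_mul, Matrix.transpose_transpose]
    rw [← h2, Matrix.trace_transpose, h]
  rw [Matrix.transpose_add, Matrix.add_mul, Matrix.mul_add, Matrix.mul_add,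
    Matrix.trace_add, Matrix.trace_add, Matrix.trace_add, h, h']
  ring

/-- The f-OTD variational principle: the pair `(A*, B*)` given by the f-OTD
mode and coefficient evolution right-hand sides is a global minimizer of
`𝓕(U̇, Ẏ) = ‖d/dt (U Yᵀ) - L U Yᵀ - F‖_F²` over all admissible derivative pairs
satisfying the orthonormality-rate constraint `Uᵀ U̇ = Φ`. -/
theorem fOTD_variational_principle {n r d : ℕ}
    (U : Matrix (Fin n) (Fin r) ℝ) (hU : Uᵀ * U = 1)
    (Y : Matrix (Fin d) (Fin r) ℝ) (hC : IsUnit (Yᵀ * Y).det)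
    (L : Matrix (Fin n) (Fin n) ℝ) (F : Matrix (Fin n) (Fin d) ℝ)
    (Φ : Matrix (Fin r) (Fin r) ℝ) (hΦ : Φᵀ = -Φ)
    (C : Matrix (Fin r) (Fin r) ℝ) (hCdef : C = Yᵀ * Y)
    (Lr : Matrix (Fin r) (Fin r) ℝ) (hLr : Lr = Uᵀ * L * U)
    (Astar : Matrix (Fin n) (Fin r) ℝ)
    (hAstar : Astar = L * U - U * Lr + (1 - U * Uᵀ) * F * Y * C⁻¹ + U * Φ)
    (Bstar : Matrix (Fin d) (Fin r) ℝ)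
    (hBstar : Bstar = Y * Lrᵀ + Fᵀ * U + Y * Φ) :
    Uᵀ * Astar = Φ ∧
      ∀ (A : Matrix (Fin n) (Fin r) ℝ) (B : Matrix (Fin d) (Fin r) ℝ),
        Uᵀ * A = Φ →
        frobNorm (Astar * Yᵀ + U * Bstarᵀ - L * U * Yᵀ - F) ≤
          frobNorm (A * Yᵀ + U * Bᵀ - L * U * Yᵀ - F) := by
  have hCC : C⁻¹ * C = 1 := Matrix.nonsing_inv_mul C (hCdef ▸ hC)
  -- part 1 : the constraint holds for Astar
  have h1 : Uᵀ * Astar = Φ := by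
    rw [hAstar, hLr]
    simp only [Matrix.mul_add, Matrix.mul_sub, Matrix.add_mul, Matrix.sub_mul,
      Matrix.mul_one, Matrix.one_mul, ← Matrix.mul_assoc, hU]
    abel
  refine ⟨h1, ?_⟩
  obtain ⟨Estar, hEdef⟩ :
      ∃ E : Matrix (Fin n) (Fin d) ℝ, E = Astar * Yᵀ + U * Bstarᵀ - L * U * Yᵀ - F := ⟨_, rfl⟩
  -- explicit form of the star residual
  have hEstar : Estar = (1 - U * Uᵀ) * F * (Y * C⁻¹ * Yᵀ - 1) := by
    rw [hEdef, hAstar, hBstar]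
    simp only [Matrix.transpose_add, Matrix.transpose_mul, Matrix.transpose_transpose, hΦ,
      Matrix.add_mul, Matrix.sub_mul, Matrix.mul_add, Matrix.mul_sub, Matrix.mul_one,
      Matrix.one_mul, Matrix.mul_neg, Matrix.neg_mul, Matrix.mul_assoc]
    abel
  have hUE : Uᵀ * Estar = 0 := by
    rw [hEstar]
    simp only [Matrix.mul_sub, Matrix.sub_mul, Matrix.mul_one, Matrix.one_mul,
      ← Matrix.mul_assoc, hU]
    simp
  have hEU : Estarᵀ * U = 0 := by
    have h2 := congrArg Matrix.transpose hUE
    simpa using h2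
  have hEY : Estar * Y = 0 := by
    rw [hEstar]
    simp only [Matrix.mul_assoc, Matrix.sub_mul, Matrix.one_mul, ← hCdef, hCC,
      Matrix.mul_one, sub_self, Matrix.mul_zero]
  intro A B _
  obtain ⟨Δ, hΔdef⟩ :
      ∃ D : Matrix (Fin n) (Fin d) ℝ, D = (A - Astar) * Yᵀ + U * (B - Bstar)ᵀ := ⟨_, rfl⟩
  have hsplit : A * Yᵀ + U * Bᵀ - L * U * Yᵀ - F = Estar + Δ := by
    rw [hEdef, hΔdef]
    simp only [Matrix.sub_mul, Matrix.mul_sub, Matrix.transpose_sub]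
    abel
  have hcross : Matrix.trace (Estarᵀ * Δ) = 0 := by
    rw [hΔdef, Matrix.mul_add, Matrix.trace_add]
    have hterm1 : Matrix.trace (Estarᵀ * ((A - Astar) * Yᵀ)) = 0 := by
      rw [← Matrix.mul_assoc, Matrix.trace_mul_cycle, ← Matrix.transpose_mul, hEY]
      simp
    have hterm2 : Estarᵀ * (U * (B - Bstar)ᵀ) = 0 := by
      rw [← Matrix.mul_assoc, hEU, Matrix.zero_mul]
    rw [hterm1, hterm2]
    simp
  unfold frobNorm
  apply Real.sqrt_le_sqrt
  rw [hsplit, ← hEdef, trace_pythagoras Estar Δ hcross]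
  have := trace_tmul_self_nonneg Δ
  linarith
end

section
/- Fix n, r, d ∈ ℕ, matrices U ∈ Matrix (Fin n) (Fin r) ℝ with Uᵀ*U = 1, Y ∈ Matrix (Fin d) (Fin r) ℝ with C := Yᵀ*Y invertible, L ∈ Matrix (Fin n) (Fin n) ℝ, F ∈ Matrix (Fin n) (Fin d) ℝ. Suppose matrices A ∈ Matrix (Fin n) (Fin r) ℝ, B ∈ Matrix (Fin d) (Fin r) ℝ and λ ∈ Matrix (Fin r) (Fin r) ℝ satisfy: (i) Uᵀ*A = Φ for a skew-symmetric Φ; (ii) the first-order optimality condition with respect to the mode rate, 2*(A*Yᵀ + U*Bᵀ - L*U*Yᵀ - F)*Y + U*λ = 0; and (iii) the first-order optimality condition with respect to the coefficient rate, Uᵀ*(A*Yᵀ + U*Bᵀ - L*U*Yᵀ - F) = 0. Then, writing L_r := Uᵀ*L*U, necessarily A = L*U - U*L_r + (1 - U*Uᵀ)*F*Y*C⁻¹ + U*Φ and B = Y*L_rᵀ + Fᵀ*U + Y*Φ. -/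
open Matrix

/-- Appendix A of the paper: the first-order optimality (stationarity) conditions of the
f-OTD Lagrangian determine the closed-form f-OTD evolution equations for the modes
(Equation 8) and coefficients (Equation 9). -/
theorem fOTD_optimality_conditions {n r d : ℕ}
    (U : Matrix (Fin n) (Fin r) ℝ) (hU : Uᵀ * U = 1)
    (Y : Matrix (Fin d) (Fin r) ℝ) (hC : IsUnit (Yᵀ * Y).det)
    (L : Matrix (Fin n) (Fin n) ℝ) (F : Matrix (Fin n) (Fin d) ℝ)
    (A : Matrix (Fin n) (Fin r) ℝ) (B : Matrix (Fin d) (Fin r) ℝ)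
    (lam : Matrix (Fin r) (Fin r) ℝ)
    (Φ : Matrix (Fin r) (Fin r) ℝ) (hΦ : Φᵀ = -Φ)
    (hconstraint : Uᵀ * A = Φ)
    (hmode : (2 : ℝ) • ((A * Yᵀ + U * Bᵀ - L * U * Yᵀ - F) * Y) + U * lam = 0)
    (hcoeff : Uᵀ * (A * Yᵀ + U * Bᵀ - L * U * Yᵀ - F) = 0) :
    A = L * U - U * (Uᵀ * L * U) + (1 - U * Uᵀ) * F * Y * (Yᵀ * Y)⁻¹ + U * Φ ∧
      B = Y * (Uᵀ * L * U)ᵀ + Fᵀ * U + Y * Φ := by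
  set R := A * Yᵀ + U * Bᵀ - L * U * Yᵀ - F with hRdef
  have hC' : (Yᵀ * Y) * (Yᵀ * Y)⁻¹ = 1 := mul_nonsing_inv _ hC
  have hlam : lam = 0 := by
    have h := congrArg (fun M => Uᵀ * M) hmode
    simp only [Matrix.mul_add, Matrix.mul_smul, Matrix.mul_zero] at h
    rw [← Matrix.mul_assoc, hcoeff, Matrix.zero_mul, smul_zero, zero_add,
      ← Matrix.mul_assoc, hU, Matrix.one_mul] at h
    exact h
  have hRY : R * Y = 0 := by
    rw [hlam, Matrix.mul_zero, add_zero] at hmode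
    exact (smul_eq_zero.mp hmode).resolve_left two_ne_zero
  have hUR : Φ * Yᵀ + Bᵀ - Uᵀ * L * U * Yᵀ - Uᵀ * F = 0 := by
    have h := hcoeff
    rw [hRdef] at h
    simp only [Matrix.mul_sub, Matrix.mul_add, ← Matrix.mul_assoc] at h
    rw [hconstraint, hU, Matrix.one_mul] at h
    exact h
  have hBT : Bᵀ = Uᵀ * L * U * Yᵀ + Uᵀ * F - Φ * Yᵀ := by
    rw [← sub_eq_zero, ← hUR]; abel
  have hB : B = Y * (Uᵀ * L * U)ᵀ + Fᵀ * U + Y * Φ := by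
    have h := congrArg Matrix.transpose hBT
    rw [Matrix.transpose_transpose] at h
    simp only [Matrix.transpose_add, Matrix.transpose_sub, Matrix.transpose_mul,
      Matrix.transpose_transpose, hΦ, Matrix.mul_neg, Matrix.mul_assoc] at h ⊢
    rw [h]; abel
  refine ⟨?_, hB⟩
  have h := hRY
  rw [hRdef, hBT] at h
  simp only [Matrix.sub_mul, Matrix.add_mul, Matrix.mul_sub, Matrix.mul_add,
    Matrix.mul_assoc] at h
  have hAC : A * (Yᵀ * Y) = (L * U - U * (Uᵀ * L * U) + (1 - U * Uᵀ) * F * Y * (Yᵀ * Y)⁻¹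
      + U * Φ) * (Yᵀ * Y) := by
    simp only [Matrix.sub_mul, Matrix.add_mul, Matrix.one_mul, Matrix.mul_assoc,
      nonsing_inv_mul _ hC, Matrix.mul_one]
    rw [← sub_eq_zero, ← h]; abel
  have h2 := congrArg (fun M => M * (Yᵀ * Y)⁻¹) hAC
  simp only [Matrix.mul_assoc, hC', Matrix.mul_one] at h2
  simpa [Matrix.mul_assoc] using h2
end

section
/- Consider an f-OTD reduction (U, Y) with gauge Φ where additionally L, F and Φ are continuous and U, Y are continuously differentiable on ℝ. If U(0)ᵀ * U(0) = 1, then U(t)ᵀ * U(t) = 1 for all t ≥ 0; that is, the f-OTD mode equation preserves orthonormality of the modes. -/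
open Matrix

private lemma fotd_algebra {n r d : ℕ} (U : Matrix (Fin n) (Fin r) ℝ)
    (L : Matrix (Fin n) (Fin n) ℝ) (F : Matrix (Fin n) (Fin d) ℝ)
    (Y : Matrix (Fin d) (Fin r) ℝ)
    (Φ C : Matrix (Fin r) (Fin r) ℝ) (hΦ : Φᵀ = -Φ) :
    (L * U - U * (Uᵀ * L * U) + (1 - U * Uᵀ) * F * Y * C + U * Φ)ᵀ * U
      + Uᵀ * (L * U - U * (Uᵀ * L * U) + (1 - U * Uᵀ) * F * Y * C + U * Φ)
    = (-(Uᵀ * L * U + Uᵀ * F * Y * C)ᵀ - Φ) * (Uᵀ * U - 1)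
      + (Uᵀ * U - 1) * (-(Uᵀ * L * U + Uᵀ * F * Y * C) + Φ) := by
  simp only [transpose_add, transpose_sub, transpose_mul, transpose_one, transpose_transpose,
    transpose_neg, hΦ]
  simp only [Matrix.mul_add, Matrix.add_mul, Matrix.sub_mul, Matrix.mul_sub, Matrix.neg_mul,
    Matrix.mul_neg, Matrix.mul_one, Matrix.one_mul, Matrix.mul_assoc, neg_neg, neg_sub,
    sub_eq_add_neg, neg_add]
  abel

/-- Finite-dimensional f-OTD setting (see paper, Section 2.2): an f-OTD reduction with
gauge `Φ` consists of modes `U`, coefficients `Y` with invertible reduced correlation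
matrix `C = YᵀY`, satisfying the f-OTD mode and coefficient ODEs entrywise. -/

def FOTDReduction {n r d : ℕ}
    (L : ℝ → Matrix (Fin n) (Fin n) ℝ) (F : ℝ → Matrix (Fin n) (Fin d) ℝ)
    (U : ℝ → Matrix (Fin n) (Fin r) ℝ) (Y : ℝ → Matrix (Fin d) (Fin r) ℝ)
    (Φ : ℝ → Matrix (Fin r) (Fin r) ℝ) : Prop :=
  (∀ t : ℝ, (Φ t)ᵀ = -Φ t) ∧
  (∀ t : ℝ, IsUnit ((Y t)ᵀ * Y t).det) ∧
  (∀ (t : ℝ) (i : Fin n) (j : Fin r),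
    HasDerivAt (fun s => U s i j)
      (((L t * U t - U t * ((U t)ᵀ * L t * U t)
        + (1 - U t * (U t)ᵀ) * F t * Y t * ((Y t)ᵀ * Y t)⁻¹
        + U t * Φ t : Matrix (Fin n) (Fin r) ℝ)) i j) t) ∧
  (∀ (t : ℝ) (i : Fin d) (j : Fin r),
    HasDerivAt (fun s => Y s i j)
      (((Y t * ((U t)ᵀ * L t * U t)ᵀ + (F t)ᵀ * U t + Y t * Φ t
        : Matrix (Fin d) (Fin r) ℝ)) i j) t)

/-- The f-OTD mode equation preserves orthonormality of the modes: if `L`, `F`, `Φ` are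
continuous (entrywise) and `U`, `Y` are continuously differentiable, then
`U(0)ᵀ U(0) = 1` implies `U(t)ᵀ U(t) = 1` for all `t ≥ 0`. -/
theorem fOTD_preserves_orthonormality {n r d : ℕ}
    (L : ℝ → Matrix (Fin n) (Fin n) ℝ) (F : ℝ → Matrix (Fin n) (Fin d) ℝ)
    (U : ℝ → Matrix (Fin n) (Fin r) ℝ) (Y : ℝ → Matrix (Fin d) (Fin r) ℝ)
    (Φ : ℝ → Matrix (Fin r) (Fin r) ℝ)
    (hred : FOTDReduction L F U Y Φ)
    (hL : ∀ i j, Continuous fun t => L t i j)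
    (hF : ∀ i j, Continuous fun t => F t i j)
    (hΦ : ∀ i j, Continuous fun t => Φ t i j)
    (h0 : (U 0)ᵀ * U 0 = 1) :
    ∀ t : ℝ, 0 ≤ t → (U t)ᵀ * U t = 1 := by
  obtain ⟨hΦs, hdet, hU', hY'⟩ := hred
  -- continuity of U, Y
  have hUce : ∀ i j, Continuous fun t => U t i j := fun i j =>
    continuous_iff_continuousAt.2 fun t => (hU' t i j).continuousAt
  have hYce : ∀ i j, Continuous fun t => Y t i j := fun i j =>
    continuous_iff_continuousAt.2 fun t => (hY' t i j).continuousAt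
  have hUc : Continuous U := continuous_matrix hUce
  have hYc : Continuous Y := continuous_matrix hYce
  have hLc : Continuous L := continuous_matrix hL
  have hFc : Continuous F := continuous_matrix hF
  have hΦc : Continuous Φ := continuous_matrix hΦ
  -- continuity of C := (YᵀY)⁻¹
  set Ci : ℝ → Matrix (Fin r) (Fin r) ℝ := fun t => ((Y t)ᵀ * Y t)⁻¹ with hCi
  have hYYc : Continuous fun t => (Y t)ᵀ * Y t := hYc.matrix_transpose.matrix_mul hYc
  have hdetne : ∀ t, ((Y t)ᵀ * Y t).det ≠ 0 := fun t => (hdet t).ne_zero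
  have hCic : Continuous Ci := by
    have h1 : Ci = fun t => (((Y t)ᵀ * Y t).det)⁻¹ • adjugate ((Y t)ᵀ * Y t) := by
      funext t
      show ((Y t)ᵀ * Y t)⁻¹ = _
      rw [Matrix.inv_def, Ring.inverse_eq_inv']
    rw [h1]
    exact (hYYc.matrix_det.inv₀ hdetne).smul hYYc.matrix_adjugate
  -- coefficient matrices A, B of the linear ODE for M = UᵀU - 1
  set S : ℝ → Matrix (Fin r) (Fin r) ℝ :=
    fun t => (U t)ᵀ * L t * U t + (U t)ᵀ * F t * Y t * Ci t with hS
  set A : ℝ → Matrix (Fin r) (Fin r) ℝ := fun t => -(S t)ᵀ - Φ t with hA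
  set B : ℝ → Matrix (Fin r) (Fin r) ℝ := fun t => -(S t) + Φ t with hB
  have hSc : Continuous S :=
    ((hUc.matrix_transpose.matrix_mul hLc).matrix_mul hUc).add
      (((hUc.matrix_transpose.matrix_mul hFc).matrix_mul hYc).matrix_mul hCic)
  have hAc : Continuous A := (hSc.matrix_transpose.neg).sub hΦc
  have hBc : Continuous B := (hSc.neg).add hΦc
  -- M as a function into a pi type
  set M : ℝ → Matrix (Fin r) (Fin r) ℝ := fun t => (U t)ᵀ * U t - 1 with hM
  set g : ℝ → (Fin r × Fin r → ℝ) := fun t p => M t p.1 p.2 with hg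
  set g' : ℝ → (Fin r × Fin r → ℝ) := fun t p => (A t * M t + M t * B t) p.1 p.2 with hg'
  have hMc : Continuous M := (hUc.matrix_transpose.matrix_mul hUc).sub continuous_const
  have hgc : Continuous g := continuous_pi fun p => hMc.matrix_elem p.1 p.2
  have hgd : ∀ t, HasDerivAt g (g' t) t := by
    intro t
    rw [hasDerivAt_pi]
    intro p
    set U'e : Matrix (Fin n) (Fin r) ℝ :=
      L t * U t - U t * ((U t)ᵀ * L t * U t)
        + (1 - U t * (U t)ᵀ) * F t * Y t * ((Y t)ᵀ * Y t)⁻¹ + U t * Φ t with hU'e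
    have key : HasDerivAt (fun s => g s p) ((U'eᵀ * U t + (U t)ᵀ * U'e) p.1 p.2) t := by
      have h1 : (fun s => g s p) =
          fun s => (∑ k, U s k p.1 * U s k p.2) - (1 : Matrix (Fin r) (Fin r) ℝ) p.1 p.2 := by
        funext s
        simp [hg, hM, Matrix.sub_apply, Matrix.mul_apply, Matrix.transpose_apply]
      rw [h1]
      have h2 : HasDerivAt (fun s => ∑ k, U s k p.1 * U s k p.2)
          (∑ k, (U'e k p.1 * U t k p.2 + U t k p.1 * U'e k p.2)) t := by
        refine HasDerivAt.fun_sum fun k _ => ?_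
        exact (hU' t k p.1).mul (hU' t k p.2)
      have h3 := h2.sub_const ((1 : Matrix (Fin r) (Fin r) ℝ) p.1 p.2)
      refine h3.congr_deriv ?_
      simp [Matrix.add_apply, Matrix.mul_apply, Matrix.transpose_apply,
        Finset.sum_add_distrib]
    have halg : U'eᵀ * U t + (U t)ᵀ * U'e = A t * M t + M t * B t := by
      rw [hU'e, hA, hB, hS, hM, hCi]
      exact fotd_algebra (U t) (L t) (F t) (Y t) (Φ t) (((Y t)ᵀ * Y t)⁻¹) (hΦs t)
    rw [halg] at key
    exact key
  -- conclusion via Grönwall on [0, t₀]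
  intro t₀ ht₀
  -- bounds for A and B on the compact interval
  set Ap : ℝ → (Fin r × Fin r → ℝ) := fun t p => A t p.1 p.2 with hAp
  set Bp : ℝ → (Fin r × Fin r → ℝ) := fun t p => B t p.1 p.2 with hBp
  have hApc : Continuous Ap := continuous_pi fun p => hAc.matrix_elem p.1 p.2
  have hBpc : Continuous Bp := continuous_pi fun p => hBc.matrix_elem p.1 p.2
  obtain ⟨Ka, hKa⟩ := (isCompact_Icc (a := (0:ℝ)) (b := t₀)).exists_bound_of_continuousOn
    hApc.continuousOn
  obtain ⟨Kb, hKb⟩ := (isCompact_Icc (a := (0:ℝ)) (b := t₀)).exists_bound_of_continuousOn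
    hBpc.continuousOn
  have hKa0 : 0 ≤ Ka := le_trans (norm_nonneg _) (hKa 0 ⟨le_refl _, ht₀⟩)
  have hKb0 : 0 ≤ Kb := le_trans (norm_nonneg _) (hKb 0 ⟨le_refl _, ht₀⟩)
  set K : ℝ := (r : ℝ) * Ka + (r : ℝ) * Kb with hK
  have hbound : ∀ t ∈ Set.Ico (0:ℝ) t₀, ‖g' t‖ ≤ K * ‖g t‖ + 0 := by
    intro t ht
    rw [add_zero]
    have htI : t ∈ Set.Icc (0:ℝ) t₀ := ⟨ht.1, le_of_lt ht.2⟩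
    have hKnn : 0 ≤ K * ‖g t‖ := by positivity
    rw [pi_norm_le_iff_of_nonneg hKnn]
    intro p
    have hAe : ∀ i k : Fin r, |A t i k| ≤ Ka := by
      intro i k
      calc |A t i k| = ‖Ap t (i, k)‖ := rfl
        _ ≤ ‖Ap t‖ := norm_le_pi_norm (Ap t) (i, k)
        _ ≤ Ka := hKa t htI
    have hBe : ∀ i k : Fin r, |B t i k| ≤ Kb := by
      intro i k
      calc |B t i k| = ‖Bp t (i, k)‖ := rfl
        _ ≤ ‖Bp t‖ := norm_le_pi_norm (Bp t) (i, k)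
        _ ≤ Kb := hKb t htI
    have hMe : ∀ i k : Fin r, |M t i k| ≤ ‖g t‖ := by
      intro i k
      calc |M t i k| = ‖g t (i, k)‖ := rfl
        _ ≤ ‖g t‖ := norm_le_pi_norm (g t) (i, k)
    have h1 : |(A t * M t) p.1 p.2| ≤ (r : ℝ) * Ka * ‖g t‖ := by
      rw [Matrix.mul_apply]
      calc |∑ k, A t p.1 k * M t k p.2| ≤ ∑ k, |A t p.1 k * M t k p.2| :=
            Finset.abs_sum_le_sum_abs _ _
        _ ≤ ∑ _k : Fin r, Ka * ‖g t‖ := by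
            refine Finset.sum_le_sum fun k _ => ?_
            rw [abs_mul]
            exact mul_le_mul (hAe p.1 k) (hMe k p.2) (abs_nonneg _) hKa0
        _ = (r : ℝ) * Ka * ‖g t‖ := by simp [mul_assoc]
    have h2 : |(M t * B t) p.1 p.2| ≤ (r : ℝ) * Kb * ‖g t‖ := by
      rw [Matrix.mul_apply]
      calc |∑ k, M t p.1 k * B t k p.2| ≤ ∑ k, |M t p.1 k * B t k p.2| :=
            Finset.abs_sum_le_sum_abs _ _
        _ ≤ ∑ _k : Fin r, Kb * ‖g t‖ := by
            refine Finset.sum_le_sum fun k _ => ?_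
            rw [abs_mul, mul_comm]
            exact mul_le_mul (hBe k p.2) (hMe p.1 k) (abs_nonneg _) hKb0
        _ = (r : ℝ) * Kb * ‖g t‖ := by simp [mul_assoc]
    calc ‖g' t p‖ = |(A t * M t) p.1 p.2 + (M t * B t) p.1 p.2| := by
          simp [hg', Matrix.add_apply, Real.norm_eq_abs]
      _ ≤ |(A t * M t) p.1 p.2| + |(M t * B t) p.1 p.2| := abs_add_le _ _
      _ ≤ (r : ℝ) * Ka * ‖g t‖ + (r : ℝ) * Kb * ‖g t‖ := add_le_add h1 h2
      _ = K * ‖g t‖ := by rw [hK]; ring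
  have hg0 : ‖g 0‖ ≤ 0 := by
    have : g 0 = 0 := by
      funext p
      simp [hg, hM, h0]
    simp [this]
  have hfinal := norm_le_gronwallBound_of_norm_deriv_right_le
    (hgc.continuousOn) (fun x _ => (hgd x).hasDerivWithinAt) hg0 hbound t₀
    ⟨ht₀, le_refl _⟩
  rw [gronwallBound_ε0_δ0] at hfinal
  have hgz : g t₀ = 0 := norm_le_zero_iff.1 hfinal
  have hMz : M t₀ = 0 := by
    ext i j
    have := congrFun hgz (i, j)
    simpa [hg] using this
  have := hMz
  rw [hM, sub_eq_zero] at this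
  exact this
end

section
/- Consider an f-OTD reduction (U, Y) with gauge Φ = 0 and suppose at a time t one has U(t)ᵀ * U(t) = 1 and there exists a matrix B ∈ Matrix (Fin r) (Fin r) ℝ such that L(t)*U(t) + F(t)*Y(t)*C(t)⁻¹ = U(t)*B (i.e., the driving term lies in the span of the current modes). Then U'(t) = 0, i.e., the f-OTD subspace does not evolve at time t. -/
open Matrix

/-- If at time `t` the modes are orthonormal and the driving term
`L(t) U(t) + F(t) Y(t) C(t)⁻¹` lies in the span of the current modes (i.e. equals
`U(t) B` for some `B`), then the f-OTD subspace (with zero gauge) does not evolve at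
time `t`: `U'(t) = 0`. -/
theorem fOTD_subspace_stationary {n r d : ℕ}
    (L : ℝ → Matrix (Fin n) (Fin n) ℝ) (F : ℝ → Matrix (Fin n) (Fin d) ℝ)
    (U : ℝ → Matrix (Fin n) (Fin r) ℝ) (Y : ℝ → Matrix (Fin d) (Fin r) ℝ)
    (hred : FOTDReduction L F U Y (fun _ => (0 : Matrix (Fin r) (Fin r) ℝ)))
    (t : ℝ) (hortho : (U t)ᵀ * U t = 1)
    (B : Matrix (Fin r) (Fin r) ℝ)
    (hspan : L t * U t + F t * Y t * ((Y t)ᵀ * Y t)⁻¹ = U t * B) :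
    ∀ (i : Fin n) (j : Fin r), HasDerivAt (fun s => U s i j) (0 : ℝ) t := by
  intro i j
  have h := hred.2.2.1 t i j
  have key : (L t * U t - U t * ((U t)ᵀ * L t * U t)
        + (1 - U t * (U t)ᵀ) * F t * Y t * ((Y t)ᵀ * Y t)⁻¹
        + U t * (0 : Matrix (Fin r) (Fin r) ℝ) : Matrix (Fin n) (Fin r) ℝ) = 0 := by
    have e : U t * ((U t)ᵀ * (L t * U t) + (U t)ᵀ * (F t * (Y t * ((Y t)ᵀ * Y t)⁻¹)))
        = L t * U t + F t * (Y t * ((Y t)ᵀ * Y t)⁻¹) := by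
      rw [← Matrix.mul_add, ← Matrix.mul_assoc (F t), hspan, ← Matrix.mul_assoc (U t)ᵀ,
        hortho, Matrix.one_mul]
    simp only [Matrix.mul_zero, add_zero, Matrix.sub_mul, Matrix.one_mul, Matrix.mul_assoc]
    rw [sub_add_sub_comm, ← Matrix.mul_add, e, sub_self]
  rw [key] at h
  simpa using h
end

section
/- Let (U, Y) be an f-OTD reduction with gauge Φ. Then the low-rank approximation V̂(t) := U(t) * Y(t)ᵀ satisfies, for all t, the evolution equation V̂'(t) = L(t)*V̂(t) + U(t)*U(t)ᵀ*F(t) + (1 - U(t)*U(t)ᵀ)*F(t)*Y(t)*C(t)⁻¹*Y(t)ᵀ. In particular, the evolution of the product U(t)Y(t)ᵀ does not depend on the gauge Φ. -/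
open Matrix

/-- The low-rank approximation `V̂(t) = U(t) Y(t)ᵀ` of an f-OTD reduction satisfies the
gauge-independent evolution equation
`V̂' = L V̂ + U Uᵀ F + (1 - U Uᵀ) F Y C⁻¹ Yᵀ` (entrywise derivatives). -/
theorem fOTD_lowRank_evolution {n r d : ℕ}
    (L : ℝ → Matrix (Fin n) (Fin n) ℝ) (F : ℝ → Matrix (Fin n) (Fin d) ℝ)
    (U : ℝ → Matrix (Fin n) (Fin r) ℝ) (Y : ℝ → Matrix (Fin d) (Fin r) ℝ)
    (Φ : ℝ → Matrix (Fin r) (Fin r) ℝ)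
    (hred : FOTDReduction L F U Y Φ) :
    ∀ (t : ℝ) (i : Fin n) (j : Fin d),
      HasDerivAt (fun s => (U s * (Y s)ᵀ) i j)
        (((L t * (U t * (Y t)ᵀ) + U t * (U t)ᵀ * F t
          + (1 - U t * (U t)ᵀ) * F t * Y t * ((Y t)ᵀ * Y t)⁻¹ * (Y t)ᵀ
          : Matrix (Fin n) (Fin d) ℝ)) i j) t := by
  intro t i j
  obtain ⟨hΦ, _hC, hU, hY⟩ := hred
  set A := L t * U t - U t * ((U t)ᵀ * L t * U t)
      + (1 - U t * (U t)ᵀ) * F t * Y t * ((Y t)ᵀ * Y t)⁻¹ + U t * Φ t with hA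
  set B := Y t * ((U t)ᵀ * L t * U t)ᵀ + (F t)ᵀ * U t + Y t * Φ t with hB
  have key : A * (Y t)ᵀ + U t * Bᵀ
      = L t * (U t * (Y t)ᵀ) + U t * (U t)ᵀ * F t
        + (1 - U t * (U t)ᵀ) * F t * Y t * ((Y t)ᵀ * Y t)⁻¹ * (Y t)ᵀ := by
    rw [hA, hB]
    simp only [Matrix.transpose_add, Matrix.transpose_mul, Matrix.transpose_transpose, hΦ t]
    simp only [Matrix.sub_mul, Matrix.add_mul, Matrix.mul_add, Matrix.mul_sub,
      Matrix.one_mul, Matrix.mul_neg, Matrix.neg_mul, Matrix.mul_assoc]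
    abel
  have h : HasDerivAt (fun s => (U s * (Y s)ᵀ) i j)
      ((A * (Y t)ᵀ + U t * Bᵀ) i j) t := by
    simp only [Matrix.add_apply, Matrix.mul_apply, Matrix.transpose_apply,
      ← Finset.sum_add_distrib]
    exact HasDerivAt.fun_sum fun k _ => (hU t i k).mul (hY t j k)
  rw [key] at h
  exact h
end

section
/- Let (U, Y) be an f-OTD reduction with gauge Φ in the full-rank case r = d, and suppose Y(t) is an invertible square matrix for every t. Then V̂(t) := U(t) * Y(t)ᵀ exactly satisfies the forced sensitivity equation: V̂'(t) = L(t)*V̂(t) + F(t) for all t. -/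
open Matrix

/-- Full-rank case `r = d`: if the coefficient matrix `Y(t)` is an invertible square
matrix for every `t`, then the low-rank approximation `V̂(t) = U(t) Y(t)ᵀ` exactly
satisfies the forced sensitivity equation `V̂' = L V̂ + F`. -/
theorem fOTD_fullRank_exact {n d : ℕ}
    (L : ℝ → Matrix (Fin n) (Fin n) ℝ) (F : ℝ → Matrix (Fin n) (Fin d) ℝ)
    (U : ℝ → Matrix (Fin n) (Fin d) ℝ) (Y : ℝ → Matrix (Fin d) (Fin d) ℝ)
    (Φ : ℝ → Matrix (Fin d) (Fin d) ℝ)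
    (hred : FOTDReduction L F U Y Φ)
    (hYinv : ∀ t : ℝ, IsUnit (Y t).det) :
    ∀ (t : ℝ) (i : Fin n) (j : Fin d),
      HasDerivAt (fun s => (U s * (Y s)ᵀ) i j)
        (((L t * (U t * (Y t)ᵀ) + F t : Matrix (Fin n) (Fin d) ℝ)) i j) t := by
  obtain ⟨hΦ, _, hU, hY⟩ := hred
  intro t i j
  set M : Matrix (Fin n) (Fin d) ℝ := L t * U t - U t * ((U t)ᵀ * L t * U t)
        + (1 - U t * (U t)ᵀ) * F t * Y t * ((Y t)ᵀ * Y t)⁻¹ + U t * Φ t with hM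
  set N : Matrix (Fin d) (Fin d) ℝ := Y t * ((U t)ᵀ * L t * U t)ᵀ + (F t)ᵀ * U t + Y t * Φ t with hN
  have h1 : Y t * ((Y t)ᵀ * Y t)⁻¹ * (Y t)ᵀ = 1 := by
    rw [Matrix.mul_inv_rev, ← Matrix.mul_assoc, Matrix.mul_nonsing_inv _ (hYinv t),
      Matrix.one_mul, Matrix.nonsing_inv_mul _ (by simpa using hYinv t)]
  have hmat : M * (Y t)ᵀ + U t * Nᵀ = L t * (U t * (Y t)ᵀ) + F t := by
    have h2 : (1 - U t * (U t)ᵀ) * F t * Y t * ((Y t)ᵀ * Y t)⁻¹ * (Y t)ᵀ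
        = F t - U t * ((U t)ᵀ * F t) := by
      rw [Matrix.mul_assoc] at h1
      simp only [Matrix.mul_assoc]
      rw [h1, Matrix.mul_one, Matrix.sub_mul, Matrix.one_mul, Matrix.mul_assoc]
    rw [hM, hN]
    simp only [Matrix.transpose_add, Matrix.transpose_mul, Matrix.transpose_transpose, hΦ t]
    rw [Matrix.add_mul, Matrix.add_mul, Matrix.sub_mul, h2]
    simp only [Matrix.mul_add, Matrix.mul_neg, Matrix.neg_mul, Matrix.mul_assoc]
    abel
  have hder : HasDerivAt (fun s => ∑ k, U s i k * Y s j k)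
      (∑ k, (M i k * Y t j k + U t i k * N j k)) t := by
    apply HasDerivAt.fun_sum; intro k _
    exact (hU t i k).mul (hY t j k)
  have hfun : (fun s => (U s * (Y s)ᵀ) i j) = fun s => ∑ k, U s i k * Y s j k := by
    funext s; simp [Matrix.mul_apply, Matrix.transpose_apply]
  rw [hfun]
  convert hder using 1
  have := congrFun (congrFun hmat i) j
  simp only [Matrix.add_apply, Matrix.mul_apply, Matrix.transpose_apply] at this ⊢
  rw [← this, ← Finset.sum_add_distrib]
end

section
/- (Exactness of f-OTD, paper's Theorem 2, finite-dimensional form.) Let L and F be continuous, let V : ℝ → Matrix (Fin n) (Fin d) ℝ be continuously differentiable and satisfy the forced sensitivity equation V'(t) = L(t)*V(t) + F(t) for all t ∈ [0, T], and let (U, Y) be an f-OTD reduction with gauge Φ, continuously differentiable, in the full-rank case r = d with Y(t) invertible for all t ∈ [0, T]. If initially V(0) = U(0) * Y(0)ᵀ, then V(t) = U(t) * Y(t)ᵀ for all t ∈ [0, T]. -/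
open Matrix

/-- Exactness of f-OTD (paper's Theorem 2, finite-dimensional form): let `L, F` be
continuous, let `V` be continuously differentiable and satisfy the forced sensitivity
equation `V' = L V + F` on `[0, T]`, and let `(U, Y)` be a continuously differentiable
f-OTD reduction with gauge `Φ` in the full-rank case `r = d`, with `Y(t)` invertible
on `[0, T]`. If `V(0) = U(0) Y(0)ᵀ`, then `V(t) = U(t) Y(t)ᵀ` on `[0, T]`. -/
theorem fOTD_exactness {n d : ℕ} (T : ℝ)
    (L : ℝ → Matrix (Fin n) (Fin n) ℝ) (F : ℝ → Matrix (Fin n) (Fin d) ℝ)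
    (hL : ∀ i j, Continuous fun t => L t i j)
    (hF : ∀ i j, Continuous fun t => F t i j)
    (V : ℝ → Matrix (Fin n) (Fin d) ℝ) (V' : ℝ → Matrix (Fin n) (Fin d) ℝ)
    (hV : ∀ (t : ℝ) (i : Fin n) (j : Fin d),
      HasDerivAt (fun s => V s i j) (V' t i j) t)
    (hV' : ∀ i j, Continuous fun t => V' t i j)
    (hVode : ∀ t ∈ Set.Icc (0 : ℝ) T, V' t = L t * V t + F t)
    (U : ℝ → Matrix (Fin n) (Fin d) ℝ) (Y : ℝ → Matrix (Fin d) (Fin d) ℝ)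
    (Φ : ℝ → Matrix (Fin d) (Fin d) ℝ)
    (hΦ : ∀ i j, Continuous fun t => Φ t i j)
    (hred : FOTDReduction L F U Y Φ)
    (hYinv : ∀ t ∈ Set.Icc (0 : ℝ) T, IsUnit (Y t).det)
    (h0 : V 0 = U 0 * (Y 0)ᵀ) :
    ∀ t ∈ Set.Icc (0 : ℝ) T, V t = U t * (Y t)ᵀ := by
  obtain ⟨hΦT, hCdet, hU, hY⟩ := hred
  intro t₀ ht₀
  have hT : (0:ℝ) ≤ T := le_trans ht₀.1 ht₀.2
  set W : ℝ → Matrix (Fin n) (Fin d) ℝ := fun s => U s * (Y s)ᵀ with hWdef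
  set UD : ℝ → Matrix (Fin n) (Fin d) ℝ := fun s =>
    L s * U s - U s * ((U s)ᵀ * L s * U s)
      + (1 - U s * (U s)ᵀ) * F s * Y s * ((Y s)ᵀ * Y s)⁻¹ + U s * Φ s with hUDdef
  set YD : ℝ → Matrix (Fin d) (Fin d) ℝ := fun s =>
    Y s * ((U s)ᵀ * L s * U s)ᵀ + (F s)ᵀ * U s + Y s * Φ s with hYDdef
  have hW' : ∀ (s : ℝ) (i : Fin n) (j : Fin d),
      HasDerivAt (fun u => W u i j) ((UD s * (Y s)ᵀ + U s * (YD s)ᵀ) i j) s := by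
    intro s i j
    have hfun : (fun u => W u i j) = fun u => ∑ k, U u i k * Y u j k := by
      funext u; simp [hWdef, Matrix.mul_apply]
    have hval : (UD s * (Y s)ᵀ + U s * (YD s)ᵀ) i j
        = ∑ k, (UD s i k * Y s j k + U s i k * YD s j k) := by
      simp [Matrix.add_apply, Matrix.mul_apply, Finset.sum_add_distrib]
    rw [hfun, hval]
    exact HasDerivAt.fun_sum fun k _ => (hU s i k).mul (hY s j k)
  have hkey : ∀ s ∈ Set.Icc (0:ℝ) T,
      UD s * (Y s)ᵀ + U s * (YD s)ᵀ = L s * W s + F s := by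
    intro s hs
    have hYd := hYinv s hs
    have hYdT : IsUnit ((Y s)ᵀ).det := by rwa [Matrix.det_transpose]
    have h1 : Y s * (((Y s)ᵀ * Y s)⁻¹ * (Y s)ᵀ) = 1 := by
      rw [Matrix.mul_inv_rev, Matrix.mul_assoc (Y s)⁻¹ ((Y s)ᵀ)⁻¹ (Y s)ᵀ,
        Matrix.nonsing_inv_mul _ hYdT, Matrix.mul_one, Matrix.mul_nonsing_inv _ hYd]
    simp only [hUDdef, hYDdef, hWdef, Matrix.transpose_add, Matrix.transpose_mul,
      Matrix.transpose_transpose, hΦT s, Matrix.neg_mul, Matrix.mul_neg,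
      Matrix.add_mul, Matrix.sub_mul, Matrix.mul_add, Matrix.mul_sub,
      Matrix.one_mul, Matrix.mul_one, Matrix.mul_assoc, h1]
    abel
  -- projection onto [0, T]
  set proj : ℝ → ℝ := fun s => min (max s 0) T with hprojdef
  have hmem : ∀ s, proj s ∈ Set.Icc (0:ℝ) T := fun s =>
    ⟨le_min (le_max_right s 0) hT, min_le_right _ _⟩
  have hpe : ∀ s ∈ Set.Icc (0:ℝ) T, proj s = s := by
    intro s hs
    simp [hprojdef, max_eq_left hs.1, min_eq_left hs.2]
  -- uniform bound on L over [0, T]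
  obtain ⟨s₀, hs₀, hmax⟩ := isCompact_Icc.exists_isMaxOn (Set.nonempty_Icc.2 hT)
    (Continuous.continuousOn (f := fun s => ∑ i, ∑ k, |L s i k|)
      (continuous_finset_sum _ fun i _ => continuous_finset_sum _ fun k _ => (hL i k).abs))
  set Cb : ℝ := ∑ i, ∑ k, |L s₀ i k| with hCbdef
  set K : NNReal := Real.toNNReal Cb with hKdef
  have hCbK : Cb ≤ (K:ℝ) := by rw [hKdef, Real.coe_toNNReal']; exact le_max_left _ _
  -- the vector field
  set v : ℝ → (Fin n → Fin d → ℝ) → (Fin n → Fin d → ℝ) :=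
    fun s x i j => (∑ k, L (proj s) i k * x k j) + F (proj s) i j with hvdef
  have hlip : ∀ s, LipschitzWith K (v s) := by
    intro s
    apply LipschitzWith.of_dist_le_mul
    intro x y
    rw [dist_eq_norm, dist_eq_norm]
    have hdiff : v s x - v s y = fun i j => ∑ k, L (proj s) i k * (x k j - y k j) := by
      funext i j
      simp [hvdef, mul_sub, Finset.sum_sub_distrib]
    rw [hdiff]
    have h00 : (0:ℝ) ≤ (K:ℝ) * ‖x - y‖ := mul_nonneg K.2 (norm_nonneg _)
    refine (pi_norm_le_iff_of_nonneg h00).2 fun i => (pi_norm_le_iff_of_nonneg h00).2 fun j => ?_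
    calc ‖∑ k, L (proj s) i k * (x k j - y k j)‖
        ≤ ∑ k, ‖L (proj s) i k * (x k j - y k j)‖ := norm_sum_le _ _
      _ = ∑ k, |L (proj s) i k| * ‖x k j - y k j‖ := by
          simp [Real.norm_eq_abs, abs_mul]
      _ ≤ ∑ k, |L (proj s) i k| * ‖x - y‖ := by
          refine Finset.sum_le_sum fun k _ => mul_le_mul_of_nonneg_left ?_ (abs_nonneg _)
          have h1 : ‖(x - y) k j‖ ≤ ‖(x - y) k‖ := norm_le_pi_norm _ j
          have h2 : ‖(x - y) k‖ ≤ ‖x - y‖ := norm_le_pi_norm _ k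
          simpa using h1.trans h2
      _ = (∑ k, |L (proj s) i k|) * ‖x - y‖ := by rw [Finset.sum_mul]
      _ ≤ (K:ℝ) * ‖x - y‖ := by
          refine mul_le_mul_of_nonneg_right (le_trans (le_trans ?_ (hmax (hmem s))) hCbK)
            (norm_nonneg _)
          exact Finset.single_le_sum (f := fun i => ∑ k, |L (proj s) i k|)
            (fun i _ => Finset.sum_nonneg fun k _ => abs_nonneg _) (Finset.mem_univ i)
  -- the two solutions, as Pi-type valued functions
  set f : ℝ → (Fin n → Fin d → ℝ) := fun s i j => V s i j with hfdef
  set g : ℝ → (Fin n → Fin d → ℝ) := fun s i j => W s i j with hgdef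
  have hfc : ContinuousOn f (Set.Icc 0 T) :=
    Continuous.continuousOn <| continuous_pi fun i => continuous_pi fun j =>
      continuous_iff_continuousAt.2 fun s => (hV s i j).continuousAt
  have hgc : ContinuousOn g (Set.Icc 0 T) :=
    Continuous.continuousOn <| continuous_pi fun i => continuous_pi fun j =>
      continuous_iff_continuousAt.2 fun s => (hW' s i j).continuousAt
  have hf' : ∀ s ∈ Set.Ico (0:ℝ) T, HasDerivWithinAt f (v s (f s)) (Set.Ici s) s := by
    intro s hs
    have hs' : s ∈ Set.Icc (0:ℝ) T := ⟨hs.1, le_of_lt hs.2⟩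
    have hd : HasDerivAt f (fun i j => V' s i j) s :=
      hasDerivAt_pi.2 fun i => hasDerivAt_pi.2 fun j => hV s i j
    have hvv : (fun i j => V' s i j) = v s (f s) := by
      funext i j
      simp [hvdef, hfdef, hpe s hs', hVode s hs', Matrix.add_apply, Matrix.mul_apply]
    rw [hvv] at hd
    exact hd.hasDerivWithinAt
  have hg' : ∀ s ∈ Set.Ico (0:ℝ) T, HasDerivWithinAt g (v s (g s)) (Set.Ici s) s := by
    intro s hs
    have hs' : s ∈ Set.Icc (0:ℝ) T := ⟨hs.1, le_of_lt hs.2⟩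
    have hd : HasDerivAt g (fun i j => (UD s * (Y s)ᵀ + U s * (YD s)ᵀ) i j) s :=
      hasDerivAt_pi.2 fun i => hasDerivAt_pi.2 fun j => hW' s i j
    have hvv : (fun i j => (UD s * (Y s)ᵀ + U s * (YD s)ᵀ) i j) = v s (g s) := by
      funext i j
      rw [hkey s hs']
      simp [hvdef, hgdef, hpe s hs', Matrix.add_apply, Matrix.mul_apply]
    rw [hvv] at hd
    exact hd.hasDerivWithinAt
  have ha : f 0 = g 0 := by
    funext i j
    have hW0 : V 0 = W 0 := by rw [hWdef]; exact h0
    exact congrFun (congrFun hW0 i) j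
  have hfin := ODE_solution_unique hlip hfc hf' hgc hg' ha ht₀
  ext i j
  exact congrFun (congrFun hfin i) j
end

section
/- Let Φ, Φ̃ : ℝ → Matrix (Fin r) (Fin r) ℝ be continuous with Φ(t)ᵀ = -Φ(t) and Φ̃(t)ᵀ = -Φ̃(t) for all t, and let R : ℝ → Matrix (Fin r) (Fin r) ℝ be continuously differentiable and satisfy the matrix ODE R'(t) = R(t)*Φ(t) - Φ̃(t)*R(t). If R(0) is orthogonal, i.e., R(0)ᵀ*R(0) = 1, then R(t) is orthogonal for all t ≥ 0, i.e., R(t)ᵀ*R(t) = 1 and R(t)*R(t)ᵀ = 1. -/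
open Matrix

/-- The rotation-matrix flow `R' = R Φ - Φ̃ R` relating two f-OTD reductions with
skew-symmetric gauges `Φ` and `Φ̃` preserves orthogonality of `R`: if `R(0)ᵀ R(0) = 1`,
then `R(t)ᵀ R(t) = 1` and `R(t) R(t)ᵀ = 1` for all `t ≥ 0`. -/
theorem rotation_flow_preserves_orthogonality {r : ℕ}
    (Φ Φt : ℝ → Matrix (Fin r) (Fin r) ℝ)
    (hΦc : ∀ i j, Continuous fun t => Φ t i j)
    (hΦtc : ∀ i j, Continuous fun t => Φt t i j)
    (hΦ : ∀ t : ℝ, (Φ t)ᵀ = -Φ t)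
    (hΦt : ∀ t : ℝ, (Φt t)ᵀ = -Φt t)
    (R : ℝ → Matrix (Fin r) (Fin r) ℝ) (R' : ℝ → Matrix (Fin r) (Fin r) ℝ)
    (hR : ∀ (t : ℝ) (i j : Fin r), HasDerivAt (fun s => R s i j) (R' t i j) t)
    (hR'c : ∀ i j, Continuous fun t => R' t i j)
    (hode : ∀ t : ℝ, R' t = R t * Φ t - Φt t * R t)
    (h0 : (R 0)ᵀ * R 0 = 1) :
    ∀ t : ℝ, 0 ≤ t → (R t)ᵀ * R t = 1 ∧ R t * (R t)ᵀ = 1 := by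
  intro t₀ ht₀
  classical
  set G : ℝ → Matrix (Fin r) (Fin r) ℝ := fun t => (R t)ᵀ * R t - 1 with hGdef
  -- derivative of G entrywise
  have hGd : ∀ (t : ℝ) (i j : Fin r),
      HasDerivAt (fun s => G s i j) ((G t * Φ t - Φ t * G t) i j) t := by
    intro t i j
    have h1 : HasDerivAt (fun s => ∑ k, R s k i * R s k j)
        (∑ k, (R' t k i * R t k j + R t k i * R' t k j)) t :=
      HasDerivAt.fun_sum fun k _ => (hR t k i).mul (hR t k j)
    have h2 : (fun s => G s i j)
        = fun s => (∑ k, R s k i * R s k j) - (1 : Matrix (Fin r) (Fin r) ℝ) i j := by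
      funext s
      simp [hGdef, Matrix.sub_apply, Matrix.mul_apply, Matrix.transpose_apply]
    have h3 : ∑ k, (R' t k i * R t k j + R t k i * R' t k j)
        = ((R' t)ᵀ * R t + (R t)ᵀ * R' t) i j := by
      simp [Matrix.add_apply, Matrix.mul_apply, Matrix.transpose_apply,
        Finset.sum_add_distrib]
    have h4 : (R' t)ᵀ * R t + (R t)ᵀ * R' t = G t * Φ t - Φ t * G t := by
      rw [hode t]
      simp only [hGdef, Matrix.transpose_sub, Matrix.transpose_mul, hΦ, hΦt]
      noncomm_ring
    rw [h2]
    have h5 := h1.sub_const ((1 : Matrix (Fin r) (Fin r) ℝ) i j)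
    rwa [h3, h4] at h5
  -- the scalar functions
  set u : ℝ → ℝ := fun t => ∑ i, ∑ j, G t i j * G t i j with hudef
  set v : ℝ → ℝ := fun t => ∑ i, ∑ j,
    ((G t * Φ t - Φ t * G t) i j * G t i j + G t i j * (G t * Φ t - Φ t * G t) i j)
    with hvdef
  have hu_deriv : ∀ t, HasDerivAt u (v t) t := by
    intro t
    exact HasDerivAt.fun_sum fun i _ => HasDerivAt.fun_sum fun j _ => (hGd t i j).mul (hGd t i j)
  have hu_nonneg : ∀ t, 0 ≤ u t := by
    intro t
    exact Finset.sum_nonneg fun i _ => Finset.sum_nonneg fun j _ => mul_self_nonneg _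
  have hu_cont : Continuous u :=
    continuous_iff_continuousAt.mpr fun t => (hu_deriv t).continuousAt
  -- bound for Φ on [0, t₀]
  have hFc : Continuous fun s => ∑ k, ∑ j, |Φ s k j| := by
    exact continuous_finset_sum _ fun k _ => continuous_finset_sum _ fun j _ => (hΦc k j).abs
  obtain ⟨M, hM⟩ := (isCompact_Icc (a := (0:ℝ)) (b := t₀)).exists_bound_of_continuousOn
    hFc.continuousOn
  have hMb : ∀ s ∈ Set.Icc (0:ℝ) t₀, ∀ k j, |Φ s k j| ≤ M := by
    intro s hs k j
    have h1 : |Φ s k j| ≤ ∑ j', |Φ s k j'| :=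
      Finset.single_le_sum (f := fun j' => |Φ s k j'|) (fun j' _ => abs_nonneg _)
        (Finset.mem_univ j)
    have h2 : (∑ j', |Φ s k j'|) ≤ ∑ k', ∑ j', |Φ s k' j'| :=
      Finset.single_le_sum (f := fun k' => ∑ j', |Φ s k' j'|)
        (fun k' _ => Finset.sum_nonneg fun j' _ => abs_nonneg _) (Finset.mem_univ k)
    have h3 := hM s hs
    rw [Real.norm_eq_abs] at h3
    exact h1.trans (h2.trans ((le_abs_self _).trans h3))
  have hM0 : 0 ≤ M := by
    have := hM 0 (Set.left_mem_Icc.mpr ht₀)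
    exact le_trans (norm_nonneg _) this
  -- key Gronwall bound
  set K : ℝ := 4 * M * r with hKdef
  have hbound : ∀ s ∈ Set.Icc (0:ℝ) t₀, |v s| ≤ K * u s := by
    intro s hs
    set c : Matrix (Fin r) (Fin r) ℝ := G s with hcdef
    set d : Matrix (Fin r) (Fin r) ℝ := G s * Φ s - Φ s * G s with hddef
    have hd : ∀ i j, |d i j| ≤ ∑ k, M * (|c i k| + |c k j|) := by
      intro i j
      have : d i j = ∑ k, (c i k * Φ s k j - Φ s i k * c k j) := by
        simp [hddef, hcdef, Matrix.sub_apply, Matrix.mul_apply, Finset.sum_sub_distrib]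
      rw [this]
      refine (Finset.abs_sum_le_sum_abs _ _).trans (Finset.sum_le_sum fun k _ => ?_)
      have h1 : |c i k * Φ s k j - Φ s i k * c k j| ≤ |c i k| * |Φ s k j| + |Φ s i k| * |c k j| := by
        calc |c i k * Φ s k j - Φ s i k * c k j|
            ≤ |c i k * Φ s k j| + |Φ s i k * c k j| := abs_sub _ _
          _ = |c i k| * |Φ s k j| + |Φ s i k| * |c k j| := by rw [abs_mul, abs_mul]
      refine h1.trans ?_
      have h2 := hMb s hs k j
      have h3 := hMb s hs i k
      nlinarith [abs_nonneg (c i k), abs_nonneg (c k j)]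
    have step : ∀ i j : Fin r,
        |(d i j * c i j + c i j * d i j)| ≤ ∑ k, M * (2 * c i j ^ 2 + c i k ^ 2 + c k j ^ 2) := by
      intro i j
      have h1 : |(d i j * c i j + c i j * d i j)| = 2 * |c i j| * |d i j| := by
        rw [mul_comm (d i j) (c i j), ← two_mul, abs_mul, abs_mul]
        simp [mul_assoc]
      rw [h1]
      calc 2 * |c i j| * |d i j| ≤ 2 * |c i j| * ∑ k, M * (|c i k| + |c k j|) := by
            apply mul_le_mul_of_nonneg_left (hd i j)
            positivity
        _ = ∑ k, 2 * |c i j| * (M * (|c i k| + |c k j|)) := by rw [Finset.mul_sum]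
        _ ≤ ∑ k, M * (2 * c i j ^ 2 + c i k ^ 2 + c k j ^ 2) := by
            refine Finset.sum_le_sum fun k _ => ?_
            nlinarith [sq_nonneg (|c i j| - |c i k|), sq_nonneg (|c i j| - |c k j|),
              sq_abs (c i j), sq_abs (c i k), sq_abs (c k j), abs_nonneg (c i j),
              abs_nonneg (c i k), abs_nonneg (c k j)]
    have hvle : |v s| ≤ ∑ i, ∑ j, ∑ k : Fin r, M * (2 * c i j ^ 2 + c i k ^ 2 + c k j ^ 2) := by
      refine (Finset.abs_sum_le_sum_abs _ _).trans ?_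
      refine Finset.sum_le_sum fun i _ => ?_
      exact (Finset.abs_sum_le_sum_abs _ _).trans (Finset.sum_le_sum fun j _ => step i j)
    refine hvle.trans (le_of_eq ?_)
    have hS : u s = ∑ i, ∑ j, c i j ^ 2 := by
      simp [hudef, hcdef, sq]
    have A1 : ∑ i, ∑ j, ∑ _k : Fin r, c i j ^ 2 = (r : ℝ) * ∑ i, ∑ j, c i j ^ 2 := by
      simp [Finset.sum_const, Finset.mul_sum, mul_comm]
    have A2 : (∑ i, ∑ _j : Fin r, ∑ k, c i k ^ 2) = (r : ℝ) * ∑ i, ∑ k, c i k ^ 2 := by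
      simp [Finset.sum_const, Finset.mul_sum, mul_comm]
    have A3 : (∑ _i : Fin r, ∑ j, ∑ k, c k j ^ 2) = (r : ℝ) * ∑ i, ∑ j, c i j ^ 2 := by
      rw [Finset.sum_const, Finset.card_univ, Fintype.card_fin, nsmul_eq_mul]
      congr 1
      rw [Finset.sum_comm]
    calc ∑ i, ∑ j, ∑ k : Fin r, M * (2 * c i j ^ 2 + c i k ^ 2 + c k j ^ 2)
        = M * ((∑ i, ∑ j, ∑ _k : Fin r, 2 * c i j ^ 2) + (∑ i, ∑ _j : Fin r, ∑ k, c i k ^ 2)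
            + (∑ _i : Fin r, ∑ j, ∑ k, c k j ^ 2)) := by
          simp only [Finset.mul_sum, Finset.sum_add_distrib, mul_add]
      _ = K * u s := by
          have A1' : (∑ i, ∑ j, ∑ _k : Fin r, 2 * c i j ^ 2)
              = 2 * ((r : ℝ) * ∑ i, ∑ j, c i j ^ 2) := by
            simp only [Finset.sum_const, Finset.card_univ, Fintype.card_fin, nsmul_eq_mul,
              Finset.mul_sum]
            exact Finset.sum_congr rfl fun i _ => Finset.sum_congr rfl fun j _ => by ring
          rw [A1', A2, A3, hS, hKdef]
          ring
  -- Gronwall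
  have hu0 : u 0 = 0 := by
    have hG0 : G 0 = 0 := by simp [hGdef, h0]
    simp [hudef, hG0]
  have hgron := norm_le_gronwallBound_of_norm_deriv_right_le (f := u) (f' := v)
    (δ := 0) (K := K) (ε := 0) (a := 0) (b := t₀) hu_cont.continuousOn
    (fun x _ => (hu_deriv x).hasDerivWithinAt)
    (by simp [hu0])
    (fun x hx => by
      rw [Real.norm_eq_abs, Real.norm_eq_abs, abs_of_nonneg (hu_nonneg x), add_zero]
      exact hbound x (Set.mem_Icc_of_Ico hx))
  have hut : u t₀ = 0 := by
    have h1 := hgron t₀ (Set.right_mem_Icc.mpr ht₀)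
    rw [gronwallBound_ε0_δ0, Real.norm_eq_abs, abs_of_nonneg (hu_nonneg t₀)] at h1
    exact le_antisymm h1 (hu_nonneg t₀)
  have hGt : G t₀ = 0 := by
    ext i j
    have h1 : ∀ i ∈ (Finset.univ : Finset (Fin r)),
        (0:ℝ) ≤ ∑ j, G t₀ i j * G t₀ i j :=
      fun i _ => Finset.sum_nonneg fun j _ => mul_self_nonneg _
    have h2 := (Finset.sum_eq_zero_iff_of_nonneg h1).mp hut i (Finset.mem_univ i)
    have h3 := (Finset.sum_eq_zero_iff_of_nonneg
      (fun j _ => mul_self_nonneg (G t₀ i j))).mp h2 j (Finset.mem_univ j)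
    simpa [mul_self_eq_zero] using h3
  have hmain : (R t₀)ᵀ * R t₀ = 1 := by
    have := sub_eq_zero.mp hGt
    simpa using this
  exact ⟨hmain, mul_eq_one_comm.mp hmain⟩
end

section
/- (Equivalence of f-OTD reductions, paper's Theorem 1, finite-dimensional form.) Let (U, Y) be an f-OTD reduction with gauge Φ, let Φ̃ : ℝ → Matrix (Fin r) (Fin r) ℝ satisfy Φ̃(t)ᵀ = -Φ̃(t) for all t, and let R : ℝ → Matrix (Fin r) (Fin r) ℝ be differentiable with R'(t) = R(t)*Φ(t) - Φ̃(t)*R(t) and R(t)ᵀ*R(t) = R(t)*R(t)ᵀ = 1 for all t. Define Ũ(t) := U(t)*R(t)ᵀ and Ỹ(t) := Y(t)*R(t)ᵀ, so that U = Ũ*R and Y = Ỹ*R. Then (Ũ, Ỹ) is an f-OTD reduction with gauge Φ̃; moreover C̃(t) := Ỹ(t)ᵀ*Ỹ(t) = R(t)*C(t)*R(t)ᵀ is invertible and Ũ(t)*Ỹ(t)ᵀ = U(t)*Y(t)ᵀ for all t, i.e. the two reductions yield identical low-rank approximations. -/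
open Matrix

lemma hasDerivAt_matmul {p q s : ℕ}
    (A : ℝ → Matrix (Fin p) (Fin q) ℝ) (A' : Matrix (Fin p) (Fin q) ℝ)
    (B : ℝ → Matrix (Fin q) (Fin s) ℝ) (B' : Matrix (Fin q) (Fin s) ℝ) (t : ℝ)
    (hA : ∀ i j, HasDerivAt (fun u => A u i j) (A' i j) t)
    (hB : ∀ i j, HasDerivAt (fun u => B u i j) (B' i j) t)
    (i : Fin p) (j : Fin s) :
    HasDerivAt (fun u => (A u * B u) i j) ((A' * B t + A t * B') i j) t := by
  simpa [Matrix.mul_apply, Finset.sum_add_distrib] using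
    HasDerivAt.fun_sum (fun k _ => ((hA i k).mul (hB k j)) : ∀ k ∈ Finset.univ, _)


/-- Equivalence of f-OTD reductions (paper's Theorem 1, finite-dimensional form): if
`(U, Y)` is an f-OTD reduction with gauge `Φ` and `R` is an orthogonal-matrix-valued
solution of `R' = R Φ - Φ̃ R` for a skew-symmetric `Φ̃`, then `(Ũ, Ỹ) = (U Rᵀ, Y Rᵀ)`
is an f-OTD reduction with gauge `Φ̃`; moreover `C̃ = ỸᵀỸ = R C Rᵀ` and the two
reductions yield identical low-rank approximations: `Ũ Ỹᵀ = U Yᵀ`. -/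
theorem fOTD_equivalence {n r d : ℕ}
    (L : ℝ → Matrix (Fin n) (Fin n) ℝ) (F : ℝ → Matrix (Fin n) (Fin d) ℝ)
    (U : ℝ → Matrix (Fin n) (Fin r) ℝ) (Y : ℝ → Matrix (Fin d) (Fin r) ℝ)
    (Φ : ℝ → Matrix (Fin r) (Fin r) ℝ)
    (hred : FOTDReduction L F U Y Φ)
    (Φt : ℝ → Matrix (Fin r) (Fin r) ℝ)
    (hΦt : ∀ t : ℝ, (Φt t)ᵀ = -Φt t)
    (R : ℝ → Matrix (Fin r) (Fin r) ℝ) (R' : ℝ → Matrix (Fin r) (Fin r) ℝ)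
    (hR : ∀ (t : ℝ) (i j : Fin r), HasDerivAt (fun s => R s i j) (R' t i j) t)
    (hode : ∀ t : ℝ, R' t = R t * Φ t - Φt t * R t)
    (horth : ∀ t : ℝ, (R t)ᵀ * R t = 1 ∧ R t * (R t)ᵀ = 1) :
    FOTDReduction L F (fun t => U t * (R t)ᵀ) (fun t => Y t * (R t)ᵀ) Φt ∧
      (∀ t : ℝ, (Y t * (R t)ᵀ)ᵀ * (Y t * (R t)ᵀ) = R t * ((Y t)ᵀ * Y t) * (R t)ᵀ) ∧
      (∀ t : ℝ, IsUnit (R t * ((Y t)ᵀ * Y t) * (R t)ᵀ).det) ∧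
      (∀ t : ℝ, (U t * (R t)ᵀ) * (Y t * (R t)ᵀ)ᵀ = U t * (Y t)ᵀ) := by
  obtain ⟨hΦ, hC, hU, hY⟩ := hred
  have h1 : ∀ t, (R t)ᵀ * R t = 1 := fun t => (horth t).1
  have h2 : ∀ t, R t * (R t)ᵀ = 1 := fun t => (horth t).2
  have h1' : ∀ t {m : ℕ} (X : Matrix (Fin r) (Fin m) ℝ), (R t)ᵀ * (R t * X) = X := by
    intro t m X; rw [← Matrix.mul_assoc, h1, Matrix.one_mul]
  have hCt : ∀ t, (Y t * (R t)ᵀ)ᵀ * (Y t * (R t)ᵀ) = R t * ((Y t)ᵀ * Y t) * (R t)ᵀ := by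
    intro t; simp [Matrix.transpose_mul, Matrix.mul_assoc]
  have hCCinv : ∀ t, ((Y t)ᵀ * Y t) * ((Y t)ᵀ * Y t)⁻¹ = 1 := fun t =>
    Matrix.mul_nonsing_inv _ (hC t)
  have hc' : ∀ t {m : ℕ} (X : Matrix (Fin r) (Fin m) ℝ),
      ((Y t)ᵀ * Y t) * (((Y t)ᵀ * Y t)⁻¹ * X) = X := by
    intro t m X; rw [← Matrix.mul_assoc, hCCinv, Matrix.one_mul]
  have hc'' : ∀ t {m : ℕ} (X : Matrix (Fin r) (Fin m) ℝ),
      (Y t)ᵀ * (Y t * (((Y t)ᵀ * Y t)⁻¹ * X)) = X := by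
    intro t m X
    have h := hc' t X; rwa [Matrix.mul_assoc] at h
  have hrid : ∀ t,
      (R t * ((Y t)ᵀ * Y t) * (R t)ᵀ) * (R t * ((Y t)ᵀ * Y t)⁻¹ * (R t)ᵀ) = 1 := by
    intro t; simp [Matrix.mul_assoc, h1' t, hc'' t, h2 t]
  have hinv : ∀ t, ((Y t * (R t)ᵀ)ᵀ * (Y t * (R t)ᵀ))⁻¹
      = R t * ((Y t)ᵀ * Y t)⁻¹ * (R t)ᵀ := by
    intro t; rw [hCt t]; exact Matrix.inv_eq_right_inv (hrid t)
  have hUnit : ∀ t, IsUnit (R t * ((Y t)ᵀ * Y t) * (R t)ᵀ).det := by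
    intro t
    exact IsUnit.of_mul_eq_one (R t * ((Y t)ᵀ * Y t)⁻¹ * (R t)ᵀ).det
      (by rw [← Matrix.det_mul, hrid t, Matrix.det_one])
  have happrox : ∀ t, (U t * (R t)ᵀ) * (Y t * (R t)ᵀ)ᵀ = U t * (Y t)ᵀ := by
    intro t
    simp [Matrix.transpose_mul, Matrix.mul_assoc, h1' t]
  refine ⟨⟨hΦt, ?_, ?_, ?_⟩, hCt, hUnit, happrox⟩
  · intro t
    rw [hCt t]; exact hUnit t
  · intro t i j
    have hRT : ∀ i j : Fin r, HasDerivAt (fun s => (R s)ᵀ i j) ((R' t)ᵀ i j) t :=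
      fun i j => hR t j i
    have h := hasDerivAt_matmul U _ (fun s => (R s)ᵀ) _ t (hU t) hRT i j
    have key : (L t * U t - U t * ((U t)ᵀ * L t * U t)
          + (1 - U t * (U t)ᵀ) * F t * Y t * ((Y t)ᵀ * Y t)⁻¹
          + U t * Φ t) * (R t)ᵀ + U t * (R' t)ᵀ
        = L t * (U t * (R t)ᵀ)
          - (U t * (R t)ᵀ) * ((U t * (R t)ᵀ)ᵀ * L t * (U t * (R t)ᵀ))
          + (1 - (U t * (R t)ᵀ) * (U t * (R t)ᵀ)ᵀ) * F t * (Y t * (R t)ᵀ)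
              * ((Y t * (R t)ᵀ)ᵀ * (Y t * (R t)ᵀ))⁻¹
          + (U t * (R t)ᵀ) * Φt t := by
      rw [hinv t, hode t]
      simp only [Matrix.transpose_sub, Matrix.transpose_add, Matrix.transpose_neg, Matrix.transpose_smul, Matrix.transpose_mul, Matrix.transpose_transpose,
        hΦ t, hΦt t, Matrix.sub_mul, Matrix.add_mul, Matrix.mul_sub, Matrix.mul_add,
        Matrix.one_mul, Matrix.mul_one, Matrix.neg_mul, Matrix.mul_neg, sub_eq_add_neg,
        neg_neg]
      simp only [Matrix.mul_assoc, h1' t]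
      abel
    rw [key] at h
    exact h
  · intro t i j
    have hRT : ∀ i j : Fin r, HasDerivAt (fun s => (R s)ᵀ i j) ((R' t)ᵀ i j) t :=
      fun i j => hR t j i
    have h := hasDerivAt_matmul Y _ (fun s => (R s)ᵀ) _ t (hY t) hRT i j
    have key : (Y t * ((U t)ᵀ * L t * U t)ᵀ + (F t)ᵀ * U t + Y t * Φ t) * (R t)ᵀ
          + Y t * (R' t)ᵀ
        = (Y t * (R t)ᵀ) * ((U t * (R t)ᵀ)ᵀ * L t * (U t * (R t)ᵀ))ᵀ
          + (F t)ᵀ * (U t * (R t)ᵀ) + (Y t * (R t)ᵀ) * Φt t := by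
      rw [hode t]
      simp only [Matrix.transpose_sub, Matrix.transpose_add, Matrix.transpose_neg, Matrix.transpose_smul, Matrix.transpose_mul, Matrix.transpose_transpose,
        hΦ t, hΦt t, Matrix.sub_mul, Matrix.add_mul, Matrix.mul_sub, Matrix.mul_add,
        Matrix.one_mul, Matrix.mul_one, Matrix.neg_mul, Matrix.mul_neg, sub_eq_add_neg,
        neg_neg]
      simp only [Matrix.mul_assoc, h1' t]
      abel
    rw [key] at h
    exact h
end

section
/- Let L : ℝ → Matrix (Fin n) (Fin n) ℝ, F : ℝ → Matrix (Fin n) (Fin d) ℝ, and let U : ℝ → Matrix (Fin n) (Fin d) ℝ and Y : ℝ → Matrix (Fin d) (Fin d) ℝ be differentiable with C(t) := Y(t)ᵀ*Y(t) invertible for all t. Write L_r(t) := U(t)ᵀ*L(t)*U(t). Suppose that for all t the product satisfies the forced sensitivity equation, d/dt (U(t)*Y(t)ᵀ) = L(t)*U(t)*Y(t)ᵀ + F(t), and that the coefficients satisfy Y'(t) = Y(t)*L_r(t)ᵀ + F(t)ᵀ*U(t). Then the modes necessarily satisfy the f-OTD mode equation with zero gauge: U'(t) = L(t)*U(t) -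 U(t)*L_r(t) + (F(t)*Y(t) - U(t)*U(t)ᵀ*F(t)*Y(t))*C(t)⁻¹ for all t. -/
open Matrix

/-- Appendix C computation of the paper: if the rank-`d` product `U(t) Y(t)ᵀ` evolves by
the full forced linear sensitivity dynamics `V' = L V + F` and the coefficient matrix
`Y` evolves by the f-OTD coefficient equation, then the basis factor `U` necessarily
evolves by the f-OTD mode equation with zero gauge. -/
theorem fOTD_mode_equation_necessary {n d : ℕ}
    (L : ℝ → Matrix (Fin n) (Fin n) ℝ) (F : ℝ → Matrix (Fin n) (Fin d) ℝ)
    (U : ℝ → Matrix (Fin n) (Fin d) ℝ) (U' : ℝ → Matrix (Fin n) (Fin d) ℝ)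
    (Y : ℝ → Matrix (Fin d) (Fin d) ℝ) (Y' : ℝ → Matrix (Fin d) (Fin d) ℝ)
    (hU : ∀ (t : ℝ) (i : Fin n) (j : Fin d), HasDerivAt (fun s => U s i j) (U' t i j) t)
    (hY : ∀ (t : ℝ) (i j : Fin d), HasDerivAt (fun s => Y s i j) (Y' t i j) t)
    (hC : ∀ t : ℝ, IsUnit ((Y t)ᵀ * Y t).det)
    (hprod : ∀ (t : ℝ) (i : Fin n) (j : Fin d),
      HasDerivAt (fun s => (U s * (Y s)ᵀ) i j)
        (((L t * (U t * (Y t)ᵀ) + F t : Matrix (Fin n) (Fin d) ℝ)) i j) t)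
    (hYode : ∀ t : ℝ, Y' t = Y t * ((U t)ᵀ * L t * U t)ᵀ + (F t)ᵀ * U t) :
    ∀ t : ℝ, U' t = L t * U t - U t * ((U t)ᵀ * L t * U t)
      + (F t * Y t - U t * (U t)ᵀ * (F t * Y t)) * ((Y t)ᵀ * Y t)⁻¹ := by
  intro t
  have hinv : ((Y t)ᵀ * Y t) * ((Y t)ᵀ * Y t)⁻¹ = 1 := Matrix.mul_nonsing_inv _ (hC t)
  have hinv' : (Y t)ᵀ * (Y t * ((Y t)ᵀ * Y t)⁻¹) = 1 := by
    rw [← Matrix.mul_assoc]; exact hinv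
  have meq : U' t * (Y t)ᵀ + U t * (Y' t)ᵀ = L t * (U t * (Y t)ᵀ) + F t := by
    ext i j
    have h1 : HasDerivAt (fun s => (U s * (Y s)ᵀ) i j)
        ((U' t * (Y t)ᵀ + U t * (Y' t)ᵀ) i j) t := by
      have e1 : (fun s => (U s * (Y s)ᵀ) i j) = fun s => ∑ k, U s i k * Y s j k := by
        funext s; simp [Matrix.mul_apply, Matrix.transpose_apply]
      have e2 : ((U' t * (Y t)ᵀ + U t * (Y' t)ᵀ) i j)
          = ∑ k, (U' t i k * Y t j k + U t i k * Y' t j k) := by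
        simp [Matrix.mul_apply, Matrix.transpose_apply, Finset.sum_add_distrib]
      rw [e1, e2]
      exact HasDerivAt.fun_sum fun k _ => (hU t i k).mul (hY t j k)
    exact h1.unique (hprod t i j)
  have h2 : U' t * (Y t)ᵀ = L t * (U t * (Y t)ᵀ) + F t - U t * (Y' t)ᵀ :=
    eq_sub_of_add_eq meq
  rw [hYode t] at h2
  have key : U' t = (U' t * (Y t)ᵀ) * Y t * ((Y t)ᵀ * Y t)⁻¹ := by
    calc U' t = U' t * (1 : Matrix (Fin d) (Fin d) ℝ) := by rw [Matrix.mul_one]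
      _ = U' t * (((Y t)ᵀ * Y t) * ((Y t)ᵀ * Y t)⁻¹) := by rw [hinv]
      _ = (U' t * (Y t)ᵀ) * Y t * ((Y t)ᵀ * Y t)⁻¹ := by
          simp [Matrix.mul_assoc]
  rw [key, h2]
  simp only [Matrix.transpose_add, Matrix.transpose_mul, Matrix.transpose_transpose,
    Matrix.add_mul, Matrix.sub_mul, Matrix.mul_add, Matrix.mul_assoc, hinv',
    Matrix.mul_one]
  abel
end
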